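/- Let K be a field with a complete nontrivial non-Archimedean absolute value and let G be a zero-dimensional locally compact Hausdorff topological group. Then the pointwise-multiplication Banach algebra C₀(G,K) possesses a bounded approximate identity consisting of idempotents of norm 1: for every u ∈ C₀(G,K) and every ε > 0 there exists a compact open subset H ⊆ G whose K-valued indicator function χ_H belongs to C₀(G,K), satisfies ‖χ_H‖ ≤ 1 and χ_H·χ_H = χ_H, and ‖u − u·χ_H‖ < ε; moreover the family of compact open subsets can be chosen increasing and directed, so that the corresponding net (χ_H) satisfies u·χ_H → u for every u ∈ C₀(G,K). -/

import Mathlib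

open ZeroAtInfty Filter TopologicalSpace
open scoped Classical

noncomputable def indC0 {G K : Type*} [TopologicalSpace G] [T2Space G] [NormedField K]
    (H : Set G) (hc : IsCompact H) (ho : IsOpen H) : C₀(G, K) where
  toFun x := if x ∈ H then 1 else 0
  continuous_toFun := by
    apply continuous_if _ continuous_const.continuousOn continuous_const.continuousOn
    intro a ha
    rw [show {x | x ∈ H} = H from rfl, (IsClopen.frontier_eq ⟨hc.isClosed, ho⟩)] at ha
    exact absurd ha (Set.notMem_empty a)
  zero_at_infty' := by
    refine tendsto_const_nhds.congr' ?_
    filter_upwards [hc.compl_mem_cocompact] with x hx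
    exact (if_neg hx).symm

theorem exists_compactOpen_superset {G : Type*} [TopologicalSpace G] [LocallyCompactSpace G]
    [T2Space G] [TotallyDisconnectedSpace G] {S : Set G} (hS : IsCompact S) :
    ∃ H : Set G, IsCompact H ∧ IsOpen H ∧ S ⊆ H := by
  have hb := loc_compact_Haus_tot_disc_of_zero_dim (H := G)
  have key : ∀ x : G, ∃ V : Set G, IsCompact V ∧ IsOpen V ∧ x ∈ V := by
    intro x
    obtain ⟨C, hC, hCn⟩ := exists_compact_mem_nhds x
    obtain ⟨V, hV, hxV, hVC⟩ := hb.mem_nhds_iff.mp (interior_mem_nhds.mpr hCn)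
    exact ⟨V, hC.of_isClosed_subset hV.1 (hVC.trans interior_subset), hV.2, hxV⟩
  choose V hVc hVo hxV using key
  obtain ⟨t, -, hcov⟩ := hS.elim_nhds_subcover V (fun x _ => (hVo x).mem_nhds (hxV x))
  exact ⟨⋃ x ∈ t, V x, t.finite_toSet.isCompact_biUnion (fun x _ => hVc x),
    isOpen_biUnion fun x _ => hVo x, hcov⟩

theorem indC0_norm_le {G K : Type*} [TopologicalSpace G] [T2Space G] [NormedField K]
    (H : Set G) (hc : IsCompact H) (ho : IsOpen H) :
    ‖(indC0 H hc ho : C₀(G, K))‖ ≤ 1 := by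
  rw [← ZeroAtInftyContinuousMap.norm_toBCF_eq_norm]
  rw [BoundedContinuousFunction.norm_le zero_le_one]
  intro x
  by_cases h : x ∈ H <;> simp [indC0, h]

theorem indC0_idem {G K : Type*} [TopologicalSpace G] [T2Space G] [NormedField K]
    (H : Set G) (hc : IsCompact H) (ho : IsOpen H) :
    (indC0 H hc ho : C₀(G, K)) * indC0 H hc ho = indC0 H hc ho := by
  ext x
  by_cases h : x ∈ H <;> simp [indC0, h]

theorem indC0_est {G K : Type*} [TopologicalSpace G] [T2Space G] [NormedField K]
    (u : C₀(G, K)) {H : Set G} (hc : IsCompact H) (ho : IsOpen H)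
    {δ : ℝ} (hδ : 0 ≤ δ) (hsub : {x | δ ≤ ‖u x‖} ⊆ H) :
    ‖u - u * indC0 H hc ho‖ ≤ δ := by
  rw [← ZeroAtInftyContinuousMap.norm_toBCF_eq_norm]
  rw [BoundedContinuousFunction.norm_le hδ]
  intro x
  by_cases h : x ∈ H
  · simp [indC0, h, hδ]
  · have : ¬ δ ≤ ‖u x‖ := fun hle => h (hsub hle)
    simp only [ZeroAtInftyContinuousMap.toBCF_apply, ZeroAtInftyContinuousMap.coe_sub,
      ZeroAtInftyContinuousMap.coe_mul, Pi.sub_apply, Pi.mul_apply]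
    simp [indC0, h]
    linarith

theorem C0_zero_dim_group_approximate_identity {K G : Type*} [NontriviallyNormedField K]
    [CompleteSpace K] [IsUltrametricDist K] [Group G] [TopologicalSpace G]
    [IsTopologicalGroup G] [LocallyCompactSpace G] [T2Space G] [TotallyDisconnectedSpace G] :
    (∀ u : C₀(G, K), ∀ ε : ℝ, 0 < ε → ∃ (H : Set G) (χ : C₀(G, K)),
      IsCompact H ∧ IsOpen H ∧ (∀ x : G, χ x = if x ∈ H then (1 : K) else 0) ∧
      ‖χ‖ ≤ 1 ∧ χ * χ = χ ∧ ‖u - u * χ‖ < ε) ∧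
    (∃ χ : CompactOpens G → C₀(G, K),
      (∀ (H : CompactOpens G) (x : G), χ H x = if x ∈ (H : Set G) then (1 : K) else 0) ∧
      (∀ H : CompactOpens G, ‖χ H‖ ≤ 1 ∧ χ H * χ H = χ H) ∧
      (∀ u : C₀(G, K), Tendsto (fun H : CompactOpens G => u * χ H) atTop (nhds u))) := by
  have main : ∀ u : C₀(G, K), ∀ ε : ℝ, 0 < ε → ∃ H₀ : CompactOpens G,
      ∀ H : CompactOpens G, H₀ ≤ H →
        ‖u - u * indC0 (H : Set G) H.isCompact H.isOpen‖ ≤ ε / 2 := by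
    intro u ε hε
    have hz := zero_at_infty u
    have hmem : {x : G | ‖u x‖ < ε / 2} ∈ cocompact G := by
      have := hz (Metric.ball_mem_nhds (0 : K) (show (0:ℝ) < ε/2 by linarith))
      filter_upwards [this] with x hx
      simpa [Metric.mem_ball, dist_zero_right] using hx
    obtain ⟨C, hCc, hCsub⟩ := mem_cocompact.mp hmem
    obtain ⟨H₀, hH₀c, hH₀o, hCH₀⟩ := exists_compactOpen_superset hCc
    refine ⟨⟨⟨H₀, hH₀c⟩, hH₀o⟩, fun H hH => ?_⟩
    apply indC0_est u H.isCompact H.isOpen (by linarith)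
    intro x hx
    have hxC : x ∈ C := by
      by_contra hxC
      have h1 : ‖u x‖ < ε / 2 := hCsub hxC
      have h2 : ε / 2 ≤ ‖u x‖ := hx
      linarith
    exact hH (hCH₀ hxC)
  constructor
  · intro u ε hε
    obtain ⟨H₀, hH₀⟩ := main u ε hε
    refine ⟨H₀, indC0 _ H₀.isCompact H₀.isOpen, H₀.isCompact, H₀.isOpen, fun x => rfl,
      indC0_norm_le _ _ _, indC0_idem _ _ _, lt_of_le_of_lt (hH₀ H₀ le_rfl) (by linarith)⟩
  · refine ⟨fun H => indC0 _ H.isCompact H.isOpen, fun H x => rfl,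
      fun H => ⟨indC0_norm_le _ _ _, indC0_idem _ _ _⟩, fun u => ?_⟩
    rw [Metric.tendsto_atTop]
    intro ε hε
    obtain ⟨H₀, hH₀⟩ := main u ε hε
    refine ⟨H₀, fun H hH => ?_⟩
    rw [dist_eq_norm, ← norm_neg]
    simpa [neg_sub] using lt_of_le_of_lt (hH₀ H hH) (by linarith)
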